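/- arXiv:1812.03499 — 2 statements merged into one kernel-verified Lean document; each statement's English description precedes it below -/
import Mathlib

section
/- Let W_α be a unilateral weighted shift on ℓ²(ℕ) with strictly positive bounded weight sequence α = (α_i). Then the spectral radius satisfies r(W_α) ≤ r(Ŵ_α), where Ŵ_α is the weighted shift with weights ((α_i + α_{i+1})/2). -/
open Filter Topology Finset
open scoped ENNReal NNReal

noncomputable section MeanAux

abbrev Hsp := lp (fun _ : ℕ => ℂ) 2

def coordCLM (j : ℕ) : Hsp →L[ℂ] ℂ :=
  LinearMap.mkContinuous
    { toFun := fun f => f j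
      map_add' := fun f g => rfl
      map_smul' := fun c f => rfl }
    1 (fun f => by
      rw [one_mul]; exact lp.norm_apply_le_norm (by norm_num) f j)

@[simp] lemma coordCLM_apply (j : ℕ) (f : Hsp) : coordCLM j f = f j := rfl

variable {w : ℕ → ℝ} {T : Hsp →L[ℂ] Hsp}

lemma shift_hasSum (hT : ∀ i : ℕ, T (lp.single 2 i 1) = (w i : ℂ) • lp.single 2 (i + 1) 1)
    (x : Hsp) :
    HasSum (fun i => (x i * w i) • lp.single 2 (i + 1) (1 : ℂ)) (T x) := by
  have h1 : HasSum (fun i => lp.single 2 i (x i)) x :=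
    lp.hasSum_single (by norm_num) x
  have h2 := h1.mapL T
  convert h2 using 2 with i
  have : lp.single 2 i (x i) = x i • (lp.single 2 i (1 : ℂ) : Hsp) := by
    rw [← lp.single_smul]
    norm_num
  rw [this, map_smul, hT i, smul_smul]

lemma shift_hasSum' (hT : ∀ i : ℕ, T (lp.single 2 i 1) = (w i : ℂ) • lp.single 2 (i + 1) 1)
    (x : Hsp) (j : ℕ) :
    HasSum (fun i => (x i * (w i : ℂ)) * ((lp.single 2 (i + 1) (1 : ℂ) : Hsp) j)) (T x j) := by
  have h := (shift_hasSum hT x).mapL (coordCLM j)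
  simpa [lp.coeFn_smul, smul_eq_mul] using h

lemma shift_coord_zero (hT : ∀ i : ℕ, T (lp.single 2 i 1) = (w i : ℂ) • lp.single 2 (i + 1) 1)
    (x : Hsp) : T x 0 = 0 := by
  have h := shift_hasSum' hT x 0
  have h0 : (fun i => (x i * (w i : ℂ)) * ((lp.single 2 (i + 1) (1 : ℂ) : Hsp) 0))
      = fun _ => (0 : ℂ) := by
    funext i
    rw [lp.single_apply_ne (E := fun _ : ℕ => ℂ) 2 (i + 1) 1 (Nat.succ_ne_zero i).symm]
    ring
  rw [h0] at h
  simpa using h.unique hasSum_zero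

lemma shift_coord_succ (hT : ∀ i : ℕ, T (lp.single 2 i 1) = (w i : ℂ) • lp.single 2 (i + 1) 1)
    (x : Hsp) (j : ℕ) : T x (j + 1) = (w j : ℂ) * x j := by
  have h := shift_hasSum' hT x (j + 1)
  have h2 : HasSum (fun i => (x i * (w i : ℂ)) * ((lp.single 2 (i + 1) (1 : ℂ) : Hsp) (j + 1)))
      ((x j * (w j : ℂ)) * ((lp.single 2 (j + 1) (1 : ℂ) : Hsp) (j + 1))) :=
    hasSum_single j (fun i hi => by
      rw [lp.single_apply_ne (E := fun _ : ℕ => ℂ) 2 (i + 1) 1 (by omega : j + 1 ≠ i + 1)]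
      ring)
  rw [h.unique h2, lp.single_apply_self]
  ring

/-- product of `n` consecutive weights starting at `j` -/
def Pw (w : ℕ → ℝ) (n j : ℕ) : ℝ := ∏ i ∈ Finset.range n, w (j + i)

lemma pow_coord_add (hT : ∀ i : ℕ, T (lp.single 2 i 1) = (w i : ℂ) • lp.single 2 (i + 1) 1)
    (n : ℕ) (x : Hsp) (j : ℕ) : (T ^ n) x (j + n) = (Pw w n j : ℂ) * x j := by
  induction n generalizing x j with
  | zero => simp [Pw]
  | succ n ih =>
    have hs : (T ^ (n + 1)) x = T ((T ^ n) x) := by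
      rw [pow_succ']; rfl
    have : j + (n + 1) = (j + n) + 1 := by omega
    rw [hs, this, shift_coord_succ hT, ih]
    simp only [Pw, Finset.prod_range_succ]
    push_cast
    ring

lemma pow_coord_lt (hT : ∀ i : ℕ, T (lp.single 2 i 1) = (w i : ℂ) • lp.single 2 (i + 1) 1)
    (n : ℕ) (x : Hsp) (j : ℕ) (hj : j < n) : (T ^ n) x j = 0 := by
  induction n generalizing x j with
  | zero => omega
  | succ n ih =>
    have hs : (T ^ (n + 1)) x = T ((T ^ n) x) := by
      rw [pow_succ']; rfl
    rw [hs]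
    cases j with
    | zero => exact shift_coord_zero hT _
    | succ m =>
      rw [shift_coord_succ hT, ih _ m (by omega)]
      ring

lemma pow_single (hT : ∀ i : ℕ, T (lp.single 2 i 1) = (w i : ℂ) • lp.single 2 (i + 1) 1)
    (n k : ℕ) :
    (T ^ n) (lp.single 2 k 1) = (Pw w n k : ℂ) • (lp.single 2 (k + n) 1 : Hsp) := by
  induction n with
  | zero => simp [Pw]
  | succ n ih =>
    have hs : (T ^ (n + 1)) (lp.single 2 k 1) = T ((T ^ n) (lp.single 2 k 1)) := by
      rw [pow_succ']; rfl
    have hk : k + (n + 1) = (k + n) + 1 := by omega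
    rw [hs, ih, map_smul, hT (k + n), smul_smul, hk]
    simp only [Pw, Finset.prod_range_succ]
    push_cast
    ring_nf

lemma norm_single_one (k : ℕ) : ‖(lp.single 2 k 1 : Hsp)‖ = 1 := by
  have := lp.norm_single (E := fun _ : ℕ => ℂ) (p := 2) (by norm_num) k (1 : ℂ)
  simpa using this

lemma Pw_le_opNorm (hT : ∀ i : ℕ, T (lp.single 2 i 1) = (w i : ℂ) • lp.single 2 (i + 1) 1)
    (hw : ∀ i, 0 < w i) (n k : ℕ) : Pw w n k ≤ ‖T ^ n‖ := by
  have h := pow_single hT n k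
  have h1 : ‖(T ^ n) (lp.single 2 k 1 : Hsp)‖ = Pw w n k := by
    rw [h, norm_smul, norm_single_one]
    have : (0:ℝ) ≤ Pw w n k := Finset.prod_nonneg fun i _ => (hw _).le
    simp [abs_of_nonneg this, Complex.norm_real]  -- ‖((Pw):ℂ)‖ = |Pw|
  calc Pw w n k = ‖(T ^ n) (lp.single 2 k 1 : Hsp)‖ := h1.symm
    _ ≤ ‖T ^ n‖ * ‖(lp.single 2 k 1 : Hsp)‖ := (T ^ n).le_opNorm _
    _ = ‖T ^ n‖ := by rw [norm_single_one]; ring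

lemma hasSum_norm_sq (f : Hsp) : HasSum (fun i => ‖f i‖ ^ 2) (‖f‖ ^ 2) := by
  have h := lp.hasSum_norm (E := fun _ : ℕ => ℂ) (p := 2) (by norm_num) f
  have h2 : (2 : ℝ≥0∞).toReal = ((2 : ℕ) : ℝ) := by norm_num
  rw [h2] at h
  simpa [Real.rpow_natCast] using h

lemma norm_le_of_shifted (m : ℕ) (c : ℝ) (hc : 0 ≤ c) (y x : Hsp)
    (h0 : ∀ j, j < m → y j = 0) (h1 : ∀ j, ‖y (j + m)‖ ≤ c * ‖x j‖) :
    ‖y‖ ≤ c * ‖x‖ := by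
  have hy := hasSum_norm_sq y
  have hx := hasSum_norm_sq x
  have hinj : Function.Injective (fun j : ℕ => j + m) := by
    intro a b h
    dsimp at h
    omega
  have hvanish : ∀ i ∉ Set.range (fun j : ℕ => j + m), ‖y i‖ ^ 2 = 0 := by
    intro i hi
    have : i < m := by
      by_contra hlt
      exact hi ⟨i - m, show i - m + m = i by omega⟩
    simp [h0 i this]
  have hy' : HasSum (fun j => ‖y (j + m)‖ ^ 2) (‖y‖ ^ 2) :=
    (hinj.hasSum_iff hvanish).mpr hy
  have hx' : HasSum (fun j => c ^ 2 * ‖x j‖ ^ 2) (c ^ 2 * ‖x‖ ^ 2) := hx.mul_left _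
  have hle : ‖y‖ ^ 2 ≤ c ^ 2 * ‖x‖ ^ 2 := by
    refine hasSum_le (fun j => ?_) hy' hx'
    have := h1 j
    nlinarith [norm_nonneg (y (j + m)), norm_nonneg (x j)]
  nlinarith [norm_nonneg y, norm_nonneg x, mul_nonneg hc (norm_nonneg x)]


instance : Nontrivial Hsp :=
  ⟨⟨0, lp.single 2 0 1, by
    intro h
    have h1 := norm_single_one 0
    rw [← h] at h1
    simp at h1⟩⟩

set_option synthInstance.maxHeartbeats 1000000 in
set_option maxHeartbeats 1000000 in
theorem spectral_radius_le_mean_transform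
    (α : ℕ → ℝ) (hpos : ∀ i, 0 < α i)
    (W What : lp (fun _ : ℕ => ℂ) 2 →L[ℂ] lp (fun _ : ℕ => ℂ) 2)
    (hW : ∀ i : ℕ, W (lp.single 2 i 1) = (α i : ℂ) • lp.single 2 (i + 1) 1)
    (hWhat : ∀ i : ℕ, What (lp.single 2 i 1) =
      (((α i + α (i + 1)) / 2 : ℝ) : ℂ) • lp.single 2 (i + 1) 1) :
    spectralRadius ℂ W ≤ spectralRadius ℂ What := by
  set β : ℕ → ℝ := fun i => (α i + α (i + 1)) / 2 with hβ
  have hβpos : ∀ i, 0 < β i := fun i => by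
    have h1 := hpos i; have h2 := hpos (i + 1)
    simp only [hβ]; linarith
  have hα_le : ∀ k, α k ≤ ‖W‖ := by
    intro k
    have h1 : ‖W (lp.single 2 k 1 : Hsp)‖ = α k := by
      rw [hW k, norm_smul, norm_single_one]
      simp [Complex.norm_real, Real.norm_eq_abs, abs_of_nonneg (hpos k).le]
    calc α k = ‖W (lp.single 2 k 1 : Hsp)‖ := h1.symm
      _ ≤ ‖W‖ * ‖(lp.single 2 k 1 : Hsp)‖ := W.le_opNorm _
      _ = ‖W‖ := by rw [norm_single_one]; ring
  have hWnonneg : (0 : ℝ) ≤ ‖W‖ := norm_nonneg _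
  -- AM-GM product bound
  have key_prod : ∀ n j, Pw α (n + 1) j ≤ ‖W‖ * Pw β n j := by
    intro n j
    have hPβ : 0 ≤ Pw β n j := Finset.prod_nonneg fun i _ => (hβpos _).le
    have hPα1 : 0 ≤ Pw α n j := Finset.prod_nonneg fun i _ => (hpos _).le
    have hPα2 : 0 ≤ Pw α n (j + 1) := Finset.prod_nonneg fun i _ => (hpos _).le
    have e1 : Pw α (n + 1) j = Pw α n j * α (j + n) := by
      simp [Pw, Finset.prod_range_succ]
    have e2 : Pw α (n + 1) j = α j * Pw α n (j + 1) := by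
      simp only [Pw, Finset.prod_range_succ', add_zero]
      rw [mul_comm]
      congr 1
      exact Finset.prod_congr rfl fun i _ => by rw [show j + (i + 1) = j + 1 + i by omega]
    have e3 : Pw α n j * Pw α n (j + 1) ≤ Pw β n j ^ 2 := by
      rw [show Pw β n j ^ 2 = ∏ i ∈ Finset.range n, β (j + i) ^ 2 by
        rw [Pw, ← Finset.prod_pow]]
      rw [show Pw α n j * Pw α n (j + 1) =
          ∏ i ∈ Finset.range n, α (j + i) * α (j + 1 + i) by
        rw [Pw, Pw, ← Finset.prod_mul_distrib]]
      refine Finset.prod_le_prod (fun i _ => mul_nonneg (hpos _).le (hpos _).le) fun i _ => ?_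
      have h1 := hpos (j + i); have h2 := hpos (j + i + 1)
      have : j + 1 + i = j + i + 1 := by omega
      rw [this]
      simp only [hβ]
      nlinarith [sq_nonneg (α (j + i) - α (j + i + 1))]
    have hsq : Pw α (n + 1) j ^ 2 ≤ (‖W‖ * Pw β n j) ^ 2 := by
      have hαj := hα_le j; have hαjn := hα_le (j + n)
      have h1 := hpos j; have h2 := hpos (j + n)
      calc Pw α (n + 1) j ^ 2 = (α j * α (j + n)) * (Pw α n j * Pw α n (j + 1)) := by
            rw [pow_two]; nth_rewrite 1 [e1]; nth_rewrite 1 [e2]; ring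
        _ ≤ (‖W‖ * ‖W‖) * (Pw β n j ^ 2) := by
            apply mul_le_mul _ e3 (by positivity) (by positivity)
            exact mul_le_mul hαj hαjn h2.le hWnonneg
        _ = (‖W‖ * Pw β n j) ^ 2 := by ring
    have hPα : 0 ≤ Pw α (n + 1) j := Finset.prod_nonneg fun i _ => (hpos _).le
    nlinarith [mul_nonneg hWnonneg hPβ]
  -- operator norm bound
  have key_norm : ∀ n : ℕ, ‖W ^ (n + 1)‖ ≤ ‖W‖ * ‖What ^ n‖ := by
    intro n
    have hc : (0 : ℝ) ≤ ‖W‖ * ‖What ^ n‖ := by positivity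
    refine ContinuousLinearMap.opNorm_le_bound _ hc fun x => ?_
    refine norm_le_of_shifted (n + 1) _ hc ((W ^ (n + 1)) x) x
      (fun j hj => pow_coord_lt hW (n + 1) x j hj) fun j => ?_
    rw [pow_coord_add hW (n + 1) x j]
    have hQ : Pw β n j ≤ ‖What ^ n‖ := Pw_le_opNorm hWhat hβpos n j
    have hPα : 0 ≤ Pw α (n + 1) j := Finset.prod_nonneg fun i _ => (hpos _).le
    calc ‖(Pw α (n + 1) j : ℂ) * x j‖ = Pw α (n + 1) j * ‖x j‖ := by
          rw [norm_mul, Complex.norm_real, Real.norm_eq_abs, abs_of_nonneg hPα]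
      _ ≤ (‖W‖ * ‖What ^ n‖) * ‖x j‖ := by
          apply mul_le_mul_of_nonneg_right _ (norm_nonneg _)
          exact (key_prod n j).trans (mul_le_mul_of_nonneg_left hQ hWnonneg)
  -- the limit argument
  have hgel := spectrum.pow_nnnorm_pow_one_div_tendsto_nhds_spectralRadius What
  refine le_of_forall_gt_imp_ge_of_dense fun c hc => ?_
  obtain ⟨t', ht'1, ht'2⟩ := ENNReal.lt_iff_exists_nnreal_btwn.mp hc
  obtain ⟨t, ht1, ht2⟩ := ENNReal.lt_iff_exists_nnreal_btwn.mp ht'2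
  have ht'pos : (0 : ℝ≥0) < t' := by
    rcases eq_or_lt_of_le (zero_le : (0 : ℝ≥0) ≤ t') with h | h
    · exfalso; rw [← h] at ht'1; exact (not_le.mpr ht'1) zero_le
    · exact h
  have ht't : t' < t := by exact_mod_cast ht1
  have htpos : (0 : ℝ≥0) < t := ht'pos.trans ht't
  have htposR : (0 : ℝ) < (t : ℝ) := htpos
  -- eventually ‖What ^ n‖₊ ≤ t' ^ n
  have hev1 : ∀ᶠ n : ℕ in atTop, ‖What ^ n‖₊ ≤ t' ^ n := by
    have h1 : ∀ᶠ n : ℕ in atTop, (‖What ^ n‖₊ : ℝ≥0∞) ^ (1 / (n : ℝ)) < (t' : ℝ≥0∞) :=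
      hgel.eventually_lt_const ht'1
    filter_upwards [h1, eventually_ge_atTop 1] with n hn hn1
    have hne : ((n : ℝ)) ≠ 0 := by positivity
    have h2 := ENNReal.rpow_le_rpow hn.le (by positivity : (0 : ℝ) ≤ (n : ℝ))
    rw [← ENNReal.rpow_mul, one_div_mul_cancel hne, ENNReal.rpow_one,
      ENNReal.rpow_natCast] at h2
    exact_mod_cast h2
  -- eventually ‖W‖ * t'^n ≤ t^(n+1)
  have hev2 : ∀ᶠ n : ℕ in atTop, ‖W‖ * (t' : ℝ) ^ n ≤ (t : ℝ) ^ (n + 1) := by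
    have hlim : Tendsto (fun n : ℕ => ‖W‖ * ((t' : ℝ) / (t : ℝ)) ^ n) atTop (𝓝 (‖W‖ * 0)) := by
      apply Tendsto.const_mul
      exact tendsto_pow_atTop_nhds_zero_of_lt_one (by positivity)
        ((div_lt_one htposR).mpr (by exact_mod_cast ht't))
    have hev := hlim.eventually_lt_const (show ‖W‖ * 0 < (t : ℝ) by simpa using htposR)
    filter_upwards [hev] with n hn
    calc ‖W‖ * (t' : ℝ) ^ n = (‖W‖ * ((t' : ℝ) / (t : ℝ)) ^ n) * (t : ℝ) ^ n := by
          rw [div_pow]; field_simp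
      _ ≤ (t : ℝ) * (t : ℝ) ^ n := mul_le_mul_of_nonneg_right hn.le (by positivity)
      _ = (t : ℝ) ^ (n + 1) := (pow_succ' _ _).symm
  -- hence eventually the Gelfand sequence of W is ≤ t
  obtain ⟨N, hN⟩ := eventually_atTop.mp (hev1.and hev2)
  have hev3 : ∀ᶠ m : ℕ in atTop, (‖W ^ m‖₊ : ℝ≥0∞) ^ (1 / (m : ℝ)) ≤ (t : ℝ≥0∞) := by
    rw [eventually_atTop]
    refine ⟨N + 1, fun m hm => ?_⟩
    obtain ⟨n, rfl⟩ : ∃ n, m = n + 1 := ⟨m - 1, by omega⟩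
    obtain ⟨h1, h2⟩ := hN n (by omega)
    have hmne : ((n + 1 : ℕ) : ℝ) ≠ 0 := by positivity
    have hnorm : ‖W ^ (n + 1)‖ ≤ (t : ℝ) ^ (n + 1) := by
      calc ‖W ^ (n + 1)‖ ≤ ‖W‖ * ‖What ^ n‖ := key_norm n
        _ ≤ ‖W‖ * (t' : ℝ) ^ n := by
            apply mul_le_mul_of_nonneg_left _ hWnonneg
            have : (‖What ^ n‖₊ : ℝ) ≤ ((t' ^ n : ℝ≥0) : ℝ) := by exact_mod_cast h1
            simpa using this
        _ ≤ (t : ℝ) ^ (n + 1) := h2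
    have hnn : ‖W ^ (n + 1)‖₊ ≤ t ^ (n + 1) := by
      rw [← NNReal.coe_le_coe]
      push_cast
      exact hnorm
    have hE : (‖W ^ (n + 1)‖₊ : ℝ≥0∞) ≤ ((t : ℝ≥0∞)) ^ ((n + 1 : ℕ)) := by
      exact_mod_cast hnn
    calc (‖W ^ (n + 1)‖₊ : ℝ≥0∞) ^ (1 / ((n + 1 : ℕ) : ℝ))
        ≤ ((t : ℝ≥0∞) ^ ((n + 1 : ℕ))) ^ (1 / ((n + 1 : ℕ) : ℝ)) :=
          ENNReal.rpow_le_rpow hE (by positivity)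
      _ = (t : ℝ≥0∞) := by
          rw [← ENNReal.rpow_natCast (t : ℝ≥0∞), ← ENNReal.rpow_mul,
            mul_one_div_cancel hmne, ENNReal.rpow_one]
  have hliminf := spectrum.spectralRadius_le_liminf_pow_nnnorm_pow_one_div ℂ W
  refine le_trans (hliminf.trans ?_) ht2.le
  calc Filter.liminf (fun n : ℕ => (‖W ^ n‖₊ : ℝ≥0∞) ^ (1 / (n : ℝ))) atTop
      ≤ Filter.liminf (fun _ : ℕ => (t : ℝ≥0∞)) atTop := Filter.liminf_le_liminf hev3
    _ = (t : ℝ≥0∞) := Filter.liminf_const _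

end MeanAux
end

section
/- Let α = (α_i) be a sequence of strictly positive numbers converging to a limit r₀. Then the mean limit of the unilateral weighted shift W_α equals its spectral radius: ℓ(W_α) = r(W_α) = r₀. Concretely, lim_{n→∞} sup_{i∈ℕ} (1/2ⁿ) ∑_{j=0}^n C(n,j) α_{i+j} = r₀. -/
open Filter Topology

local notation "H" => lp (fun _ : ℕ => ℂ) 2

lemma part1 (α : ℕ → ℝ) (r₀ : ℝ) (hlim : Tendsto α atTop (nhds r₀)) :
    Tendsto
      (fun n : ℕ => ⨆ i : ℕ,
        ((2 : ℝ) ^ n)⁻¹ * ∑ j ∈ Finset.range (n + 1), (n.choose j : ℝ) * α (i + j))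
      atTop (nhds r₀) := by
  set g : ℕ → ℕ → ℝ := fun i n =>
    ((2 : ℝ) ^ n)⁻¹ * ∑ j ∈ Finset.range (n + 1), (n.choose j : ℝ) * α (i + j) with hg
  -- uniform bound on |α i - r₀|
  have hδ : Tendsto (fun i => |α i - r₀|) atTop (𝓝 0) := by
    have := (hlim.sub_const r₀).abs
    simpa using this
  obtain ⟨M, hM⟩ : ∃ M, ∀ i, |α i - r₀| ≤ M := by
    obtain ⟨M, hM⟩ := hδ.bddAbove_range
    exact ⟨M, fun i => hM ⟨i, rfl⟩⟩
  have hM0 : 0 ≤ M := le_trans (abs_nonneg _) (hM 0)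
  rw [Metric.tendsto_atTop]
  intro ε hε
  set ε₂ := ε / 2 with hε₂def
  have hε₂ : 0 < ε₂ := by positivity
  obtain ⟨N, hN⟩ := (Metric.tendsto_atTop.mp hlim) ε₂ hε₂
  simp only [Real.dist_eq] at hN
  -- remainder R n
  set R : ℕ → ℝ := fun n => M * ((N : ℝ) * ((n : ℝ) + 1) ^ N) / 2 ^ n with hR
  have hRpos : ∀ n, 0 ≤ R n := by
    intro n; rw [hR]; positivity
  -- key uniform estimate
  have key : ∀ n i, |g i n - r₀| ≤ ε₂ + R n := by
    intro n i
    have h2n : (0:ℝ) < 2 ^ n := by positivity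
    have hsumchoose : ∑ j ∈ Finset.range (n + 1), (n.choose j : ℝ) = 2 ^ n := by
      rw [← Nat.cast_sum]
      rw [Nat.sum_range_choose]
      push_cast; ring
    have hgr : g i n - r₀ = ((2 : ℝ) ^ n)⁻¹ *
        ∑ j ∈ Finset.range (n + 1), (n.choose j : ℝ) * (α (i + j) - r₀) := by
      rw [hg]
      simp only [mul_sub]
      rw [Finset.sum_sub_distrib, ← Finset.sum_mul, hsumchoose]
      field_simp
    rw [hgr, abs_mul, abs_inv, abs_pow, abs_two]
    rw [inv_mul_le_iff₀ h2n]
    calc |∑ j ∈ Finset.range (n + 1), (n.choose j : ℝ) * (α (i + j) - r₀)|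
        ≤ ∑ j ∈ Finset.range (n + 1), |(n.choose j : ℝ) * (α (i + j) - r₀)| :=
          Finset.abs_sum_le_sum_abs _ _
      _ ≤ ∑ j ∈ Finset.range (n + 1),
            ((n.choose j : ℝ) * ε₂ + if j < N then (n.choose j : ℝ) * M else 0) := by
          apply Finset.sum_le_sum
          intro j _
          rw [abs_mul, Nat.abs_cast]
          by_cases hj : j < N
          · rw [if_pos hj]
            have : |α (i + j) - r₀| ≤ ε₂ + M := by
              have := hM (i + j); linarith [hε₂.le]
            nlinarith [Nat.cast_nonneg (α := ℝ) (n.choose j)]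
          · rw [if_neg hj]
            have hjN : N ≤ i + j := le_add_left (le_of_not_gt hj)
            have := (hN (i + j) hjN).le
            have hc : (0:ℝ) ≤ (n.choose j : ℝ) := Nat.cast_nonneg _
            nlinarith
      _ = (∑ j ∈ Finset.range (n + 1), (n.choose j : ℝ)) * ε₂ +
            ∑ j ∈ Finset.range (n + 1), (if j < N then (n.choose j : ℝ) * M else 0) := by
          rw [Finset.sum_add_distrib, Finset.sum_mul]
      _ ≤ 2 ^ n * ε₂ + (N : ℝ) * ((n : ℝ) + 1) ^ N * M := by
          rw [hsumchoose]
          gcongr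
          calc ∑ j ∈ Finset.range (n + 1), (if j < N then (n.choose j : ℝ) * M else 0)
              = ∑ j ∈ (Finset.range (n + 1)).filter (· < N), (n.choose j : ℝ) * M := by
                rw [Finset.sum_filter]
            _ ≤ ∑ j ∈ Finset.range N, (n.choose j : ℝ) * M := by
                apply Finset.sum_le_sum_of_subset_of_nonneg
                · intro j hj
                  simp only [Finset.mem_filter, Finset.mem_range] at hj ⊢
                  exact hj.2
                · intro j _ _; positivity
            _ ≤ ∑ j ∈ Finset.range N, ((n : ℝ) + 1) ^ N * M := by
                apply Finset.sum_le_sum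
                intro j hj
                have h1 : (n.choose j : ℝ) ≤ ((n : ℝ)) ^ j := by
                  exact_mod_cast Nat.cast_le.mpr (Nat.choose_le_pow n j)
                have h2 : ((n : ℝ)) ^ j ≤ ((n : ℝ) + 1) ^ j := by
                  gcongr; linarith [Nat.cast_nonneg (α := ℝ) n]
                have h3 : ((n : ℝ) + 1) ^ j ≤ ((n : ℝ) + 1) ^ N := by
                  apply pow_le_pow_right₀ (by linarith [Nat.cast_nonneg (α := ℝ) n])
                  exact (Finset.mem_range.mp hj).le
                nlinarith
            _ = (N : ℝ) * ((n : ℝ) + 1) ^ N * M := by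
                rw [Finset.sum_const, Finset.card_range]; push_cast; ring
      _ = 2 ^ n * (ε₂ + R n) := by rw [hR]; field_simp
  -- sup bounds
  have hbdd : ∀ n, BddAbove (Set.range fun i => g i n) := by
    intro n
    refine ⟨r₀ + (ε₂ + R n), ?_⟩
    rintro x ⟨i, rfl⟩
    have := key n i
    have := abs_sub_le_iff.mp this
    linarith [this.1]
  have hsup : ∀ n, |(⨆ i, g i n) - r₀| ≤ ε₂ + R n := by
    intro n
    rw [abs_sub_le_iff]
    constructor
    · have : (⨆ i, g i n) ≤ r₀ + (ε₂ + R n) := by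
        apply ciSup_le
        intro i
        have := (abs_sub_le_iff.mp (key n i)).1
        linarith
      linarith
    · have h0 : g 0 n ≤ ⨆ i, g i n := le_ciSup (hbdd n) 0
      have := (abs_sub_le_iff.mp (key n 0)).2
      linarith
  -- R n → 0
  have hR0 : Tendsto R atTop (𝓝 0) := by
    have hbase : Tendsto (fun n : ℕ => ((n : ℝ)) ^ N / 2 ^ n) atTop (𝓝 0) :=
      tendsto_pow_const_div_const_pow_of_one_lt N one_lt_two
    have hshift : Tendsto (fun n : ℕ => (((n + 1 : ℕ)) : ℝ) ^ N / 2 ^ (n + 1)) atTop (𝓝 0) :=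
      hbase.comp (tendsto_add_atTop_nat 1)
    have : Tendsto (fun n : ℕ => (2 * (M * N)) * ((((n + 1 : ℕ)) : ℝ) ^ N / 2 ^ (n + 1)))
        atTop (𝓝 (2 * (M * N) * 0)) := hshift.const_mul _
    rw [mul_zero] at this
    convert this using 2 with n
    rw [hR]
    push_cast
    field_simp
    ring
  obtain ⟨N₁, hN₁⟩ := (Metric.tendsto_atTop.mp hR0) ε₂ hε₂
  refine ⟨N₁, fun n hn => ?_⟩
  have hRn : R n < ε₂ := by
    have := hN₁ n hn
    rw [Real.dist_eq, sub_zero, abs_of_nonneg (hRpos n)] at this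
    exact this
  have := hsup n
  rw [Real.dist_eq]
  calc |(⨆ i, g i n) - r₀| ≤ ε₂ + R n := this
    _ < ε₂ + ε₂ := by linarith
    _ = ε := by rw [hε₂def]; ring



lemma ortho_e : Orthonormal ℂ (fun i : ℕ => lp.single 2 i (1 : ℂ)) := by
  rw [orthonormal_iff_ite]
  intro i j
  rw [lp.inner_single_left]
  simp only [RCLike.inner_apply, map_one, one_mul]
  rw [lp.single_apply]
  simp [eq_comm, Pi.single_apply]

lemma norm_e (i : ℕ) : ‖(lp.single 2 i (1 : ℂ) : H)‖ = 1 := by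
  have h : (0:ℝ) < (2 : ENNReal).toReal := by norm_num
  have := lp.norm_single (E := fun _ : ℕ => ℂ) (p := 2) (by norm_num) i (1:ℂ)
  simpa using this

lemma single_eq_smul (x : H) (i : ℕ) :
    (lp.single 2 i (x i : ℂ) : H) = (x i : ℂ) • (lp.single 2 i (1 : ℂ) : H) := by
  have := lp.single_smul (E := fun _ : ℕ => ℂ) 2 i (x i) (1 : ℂ)
  rw [smul_eq_mul, mul_one] at this
  exact this

lemma shift_opNorm_le (T : H →L[ℂ] H) (γ : ℕ → ℝ) (m : ℕ) (B : ℝ) (hB : 0 ≤ B)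
    (hγ : ∀ i, |γ i| ≤ B)
    (hT : ∀ i, T (lp.single 2 i 1) = (γ i : ℂ) • lp.single 2 (i + m) 1) :
    ‖T‖ ≤ B := by
  refine T.opNorm_le_bound hB fun x => ?_
  have hsum : HasSum (fun i : ℕ => (lp.single 2 i (x i : ℂ) : H)) x :=
    lp.hasSum_single (by norm_num) x
  set y : Finset ℕ → H := fun F => ∑ i ∈ F, lp.single 2 i (x i : ℂ) with hy
  have key : ∀ F : Finset ℕ, ‖T (y F)‖ ≤ B * ‖y F‖ := by
    intro F
    have hyF : y F = ∑ i ∈ F, (x i : ℂ) • lp.single 2 i (1 : ℂ) := by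
      rw [hy]; exact Finset.sum_congr rfl fun i _ => single_eq_smul x i
    have hTyF : T (y F) = ∑ i ∈ F, ((x i : ℂ) * (γ i : ℂ)) •
        (fun i : ℕ => lp.single 2 (i + m) (1 : ℂ)) i := by
      rw [hyF, map_sum]
      refine Finset.sum_congr rfl fun i _ => ?_
      rw [map_smul, hT i, smul_smul]
    have ho1 : Orthonormal ℂ (fun i : ℕ => lp.single 2 (i + m) (1 : ℂ) : ℕ → H) := by
      exact ortho_e.comp (fun i : ℕ => i + m) (add_left_injective m)
    -- norms squared
    have hn1 : ‖T (y F)‖ ^ 2 = ∑ i ∈ F, ‖x i * (γ i : ℂ)‖ ^ 2 := by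
      have := ho1.inner_sum (fun i => (x i : ℂ) * (γ i : ℂ)) (fun i => (x i : ℂ) * (γ i : ℂ)) F
      rw [← hTyF] at this
      have h2 := inner_self_eq_norm_sq (𝕜 := ℂ) (T (y F))
      rw [this] at h2
      rw [← h2]
      rw [map_sum]
      refine Finset.sum_congr rfl fun i _ => ?_
      rw [RCLike.conj_mul]
      simp
      norm_cast
    have hn2 : ‖y F‖ ^ 2 = ∑ i ∈ F, ‖(x i : ℂ)‖ ^ 2 := by
      have := ortho_e.inner_sum (fun i => (x i : ℂ)) (fun i => (x i : ℂ)) F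
      rw [← hyF] at this
      have h2 := inner_self_eq_norm_sq (𝕜 := ℂ) (y F)
      rw [this] at h2
      rw [← h2, map_sum]
      refine Finset.sum_congr rfl fun i _ => ?_
      rw [RCLike.conj_mul]
      simp
      norm_cast
    have hsq : ‖T (y F)‖ ^ 2 ≤ (B * ‖y F‖) ^ 2 := by
      rw [hn1, mul_pow, hn2, Finset.mul_sum]
      apply Finset.sum_le_sum
      intro i _
      rw [norm_mul, mul_pow]
      have h1 : ‖(γ i : ℂ)‖ = |γ i| := by
        rw [Complex.norm_real, Real.norm_eq_abs]
      have h2 : ‖(γ i : ℂ)‖ ^ 2 ≤ B ^ 2 := by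
        rw [h1]
        exact pow_le_pow_left₀ (abs_nonneg _) (hγ i) 2
      nlinarith [norm_nonneg (x i : ℂ), sq_nonneg (‖(x i : ℂ)‖)]
    have hBy : 0 ≤ B * ‖y F‖ := mul_nonneg hB (norm_nonneg _)
    exact (pow_le_pow_iff_left₀ (norm_nonneg _) hBy (two_ne_zero)).mp hsq
  have h1 : Tendsto y atTop (𝓝 x) := hsum
  have h2 : Tendsto (fun F => ‖T (y F)‖) atTop (𝓝 ‖T x‖) :=
    ((T.continuous.tendsto x).comp h1).norm
  have h3 : Tendsto (fun F => B * ‖y F‖) atTop (𝓝 (B * ‖x‖)) := (h1.norm.const_mul B)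
  exact le_of_tendsto_of_tendsto' h2 h3 key



section
variable (α : ℕ → ℝ) (W : H →L[ℂ] H)
  (hW : ∀ i : ℕ, W (lp.single 2 i 1) = (α i : ℂ) • lp.single 2 (i + 1) 1)

lemma pow_single_s18 (hW : ∀ i : ℕ, W (lp.single 2 i 1) = (α i : ℂ) • lp.single 2 (i + 1) 1)
    (n i : ℕ) :
    (W ^ n) (lp.single 2 i 1) =
      ((∏ j ∈ Finset.range n, α (i + j) : ℝ) : ℂ) • (lp.single 2 (i + n) (1:ℂ) : H) := by
  induction n generalizing i with
  | zero => simp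
  | succ n ih =>
    rw [pow_succ', ContinuousLinearMap.mul_apply, ih i, map_smul, hW (i + n), smul_smul]
    rw [Finset.prod_range_succ]
    push_cast
    rw [← add_assoc]
end




lemma part2 (α : ℕ → ℝ) (hpos : ∀ i, 0 < α i) (r₀ : ℝ) (hlim : Tendsto α atTop (nhds r₀))
    (W : H →L[ℂ] H)
    (hW : ∀ i : ℕ, W (lp.single 2 i 1) = (α i : ℂ) • lp.single 2 (i + 1) 1) :
    (spectralRadius ℂ W).toReal = r₀ := by
  have hr₀ : 0 ≤ r₀ := ge_of_tendsto hlim (Eventually.of_forall fun i => (hpos i).le)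
  set β : ℕ → ℕ → ℝ := fun i n => ∏ j ∈ Finset.range n, α (i + j) with hβ
  have hβpos : ∀ i n, 0 < β i n := fun i n => Finset.prod_pos fun j _ => hpos _
  have hlow : ∀ n i, β i n ≤ ‖W ^ n‖ := by
    intro n i
    have h := (W ^ n).le_opNorm (lp.single 2 i 1)
    rw [pow_single_s18 α W hW n i, norm_e, mul_one, norm_smul, norm_e, mul_one] at h
    rwa [Complex.norm_real, Real.norm_eq_abs, abs_of_pos (hβpos i n)] at h
  have hup : ∀ (n : ℕ) (B : ℝ), 0 ≤ B → (∀ i, β i n ≤ B) → ‖W ^ n‖ ≤ B := by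
    intro n B hB hβB
    exact shift_opNorm_le (W ^ n) (β · n) n B hB
      (fun i => by rw [abs_of_pos (hβpos i n)]; exact hβB i)
      (fun i => pow_single_s18 α W hW n i)
  set u : ℕ → ℝ := fun n => ‖W ^ n‖ ^ (1 / (n : ℝ)) with hu_def
  obtain ⟨C₀, hC₀⟩ : ∃ C₀, ∀ i, α i ≤ C₀ := by
    obtain ⟨M, hM⟩ := hlim.bddAbove_range
    exact ⟨M, fun i => hM ⟨i, rfl⟩⟩
  have hu : Tendsto u atTop (𝓝 r₀) := by
    rw [Metric.tendsto_atTop]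
    intro ε hε
    set ε₂ := ε / 2 with hε₂def
    have hε₂ : 0 < ε₂ := by positivity
    obtain ⟨N, hN⟩ := (Metric.tendsto_atTop.mp hlim) ε₂ hε₂
    simp only [Real.dist_eq] at hN
    set c := r₀ + ε₂ with hc_def
    have hc0 : 0 < c := by positivity
    set C := max C₀ (max 1 c) with hC_def
    have hC1 : (1:ℝ) ≤ C := le_max_of_le_right (le_max_left _ _)
    have hCc : c ≤ C := le_max_of_le_right (le_max_right _ _)
    have hC0 : ∀ i, α i ≤ C := fun i => le_max_of_le_left (hC₀ i)
    have hCpos : (0:ℝ) < C := lt_of_lt_of_le one_pos hC1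
    -- upper bound on norms
    have hub : ∀ n, N ≤ n → ‖W ^ n‖ ≤ C ^ N * c ^ (n - N) := by
      intro n hNn
      apply hup n _ (by positivity)
      intro i
      calc β i n ≤ ∏ j ∈ Finset.range n, (if i + j < N then C else c) := by
            apply Finset.prod_le_prod (fun j _ => (hpos _).le)
            intro j _
            by_cases hj : i + j < N
            · rw [if_pos hj]; exact hC0 _
            · rw [if_neg hj]
              have := (hN (i + j) (le_of_not_gt hj)).le
              rw [abs_sub_le_iff] at this
              rw [hc_def]; linarith [this.1]
        _ = (∏ j ∈ Finset.range N, (if i + j < N then C else c)) *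
              ∏ j ∈ Finset.Ico N n, (if i + j < N then C else c) :=
            (Finset.prod_range_mul_prod_Ico _ hNn).symm
        _ ≤ C ^ N * c ^ (n - N) := by
            apply mul_le_mul
            · calc (∏ j ∈ Finset.range N, (if i + j < N then C else c))
                  ≤ ∏ _j ∈ Finset.range N, C := by
                    apply Finset.prod_le_prod
                    · intro j _; split <;> positivity
                    · intro j _; split
                      · exact le_refl _
                      · exact hCc
                _ = C ^ N := by rw [Finset.prod_const, Finset.card_range]
            · have : ∀ j ∈ Finset.Ico N n, (if i + j < N then C else c) = c := by
                intro j hj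
                rw [if_neg]
                have := (Finset.mem_Ico.mp hj).1
                omega
              rw [Finset.prod_congr rfl this, Finset.prod_const, Nat.card_Ico]
            · apply Finset.prod_nonneg
              intro j _; split <;> positivity
            · positivity
    -- v and its limit
    set v : ℕ → ℝ := fun n => (C ^ N) ^ (1 / (n:ℝ)) * c ^ ((((n - N : ℕ)):ℝ) / (n:ℝ)) with hv_def
    have hunv : ∀ n, max N 1 ≤ n → u n ≤ v n := by
      intro n hn
      have hn1 : 1 ≤ n := le_trans (le_max_right _ _) hn
      have hNn : N ≤ n := le_trans (le_max_left _ _) hn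
      have h1 : u n ≤ (C ^ N * c ^ (n - N)) ^ (1 / (n:ℝ)) := by
        apply Real.rpow_le_rpow (norm_nonneg _) (hub n hNn) (by positivity)
      calc u n ≤ (C ^ N * c ^ (n - N)) ^ (1 / (n:ℝ)) := h1
        _ = v n := by
            rw [hv_def]
            rw [Real.mul_rpow (by positivity) (by positivity)]
            congr 1
            rw [← Real.rpow_natCast c (n - N), ← Real.rpow_mul hc0.le, mul_one_div]
    have hv : Tendsto v atTop (𝓝 c) := by
      have t1 : Tendsto (fun n : ℕ => (C ^ N : ℝ) ^ (1 / (n:ℝ))) atTop (𝓝 1) := by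
        have hcont : ContinuousAt ((C ^ N : ℝ) ^ · : ℝ → ℝ) 0 :=
          Real.continuousAt_const_rpow (by positivity)
        have := hcont.tendsto.comp tendsto_one_div_atTop_nhds_zero_nat
        simpa [Real.rpow_zero, Function.comp_def] using this
      have he : Tendsto (fun n : ℕ => (((n - N : ℕ)):ℝ) / (n:ℝ)) atTop (𝓝 1) := by
        have h2 : Tendsto (fun n : ℕ => 1 - (N:ℝ) / (n:ℝ)) atTop (𝓝 1) := by
          have h0 := (tendsto_const_div_atTop_nhds_zero_nat (N:ℝ))
          have h3 : Tendsto (fun n : ℕ => (1:ℝ) - (N:ℝ) / (n:ℝ)) atTop (𝓝 (1 - 0)) :=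
            tendsto_const_nhds.sub h0
          simpa using h3
        apply h2.congr'
        filter_upwards [eventually_ge_atTop (max N 1)] with n hn
        have hNn : N ≤ n := le_trans (le_max_left _ _) hn
        have hn1 : 1 ≤ n := le_trans (le_max_right _ _) hn
        have hn0 : (n:ℝ) ≠ 0 := by positivity
        rw [Nat.cast_sub hNn]
        field_simp
      have t2 : Tendsto (fun n : ℕ => c ^ ((((n - N : ℕ)):ℝ) / (n:ℝ))) atTop (𝓝 c) := by
        have hcont : ContinuousAt (c ^ · : ℝ → ℝ) 1 :=
          Real.continuousAt_const_rpow hc0.ne'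
        have := hcont.tendsto.comp he
        simpa [Real.rpow_one, Function.comp_def] using this
      have := t1.mul t2
      rw [one_mul] at this
      exact this
    have hvev : ∀ᶠ n in atTop, v n < r₀ + ε := by
      apply hv.eventually_lt_const
      rw [hc_def, hε₂def]; linarith
    obtain ⟨N₂, hN₂⟩ := eventually_atTop.mp hvev
    -- lower bound
    set x := max (r₀ - ε₂) 0 with hx_def
    have hx0 : 0 ≤ x := le_max_right _ _
    have hαx : ∀ i, N ≤ i → x ≤ α i := by
      intro i hi
      rw [hx_def, max_le_iff]
      constructor
      · have := (abs_sub_le_iff.mp (hN i hi).le).2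
        linarith
      · exact (hpos i).le
    have hux : ∀ n, 1 ≤ n → x ≤ u n := by
      intro n hn1
      have hxn : x ^ n ≤ β N n := by
        rw [hβ]
        calc x ^ n = ∏ _j ∈ Finset.range n, x := by
              rw [Finset.prod_const, Finset.card_range]
          _ ≤ ∏ j ∈ Finset.range n, α (N + j) :=
              Finset.prod_le_prod (fun j _ => hx0) (fun j _ => hαx (N + j) (by omega))
      have h1 : x ^ n ≤ ‖W ^ n‖ := le_trans hxn (hlow n N)
      have h2 : (x ^ n : ℝ) ^ (1 / (n:ℝ)) ≤ u n :=
        Real.rpow_le_rpow (by positivity) h1 (by positivity)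
      rwa [← Real.rpow_natCast x n, ← Real.rpow_mul hx0, mul_one_div,
        div_self (by exact_mod_cast Nat.pos_of_ne_zero (by omega) |>.ne' : (n:ℝ) ≠ 0),
        Real.rpow_one] at h2
    refine ⟨max (max N 1) N₂, fun n hn => ?_⟩
    have hnN1 : max N 1 ≤ n := le_trans (le_max_left _ _) hn
    have hnN₂ : N₂ ≤ n := le_trans (le_max_right _ _) hn
    have hn1 : 1 ≤ n := le_trans (le_max_right _ _) hnN1
    rw [Real.dist_eq, abs_sub_lt_iff]
    constructor
    · have := lt_of_le_of_lt (hunv n hnN1) (hN₂ n hnN₂)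
      linarith
    · have h1 := hux n hn1
      have h2 : r₀ - ε < x := by
        rw [hx_def, hε₂def]
        have : r₀ - ε < r₀ - ε / 2 := by linarith
        exact lt_max_of_lt_left this
      linarith
  -- Gelfand
  have hGel := spectrum.pow_norm_pow_one_div_tendsto_nhds_spectralRadius W
  have h2 : Tendsto (fun n : ℕ => ENNReal.ofReal (u n)) atTop (𝓝 (ENNReal.ofReal r₀)) :=
    (ENNReal.continuous_ofReal.tendsto r₀).comp hu
  have heq : spectralRadius ℂ W = ENNReal.ofReal r₀ := tendsto_nhds_unique hGel h2
  rw [heq, ENNReal.toReal_ofReal hr₀]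

theorem mean_limit_of_convergent_weights
    (α : ℕ → ℝ) (hpos : ∀ i, 0 < α i) (r₀ : ℝ) (hlim : Tendsto α atTop (nhds r₀))
    (W : lp (fun _ : ℕ => ℂ) 2 →L[ℂ] lp (fun _ : ℕ => ℂ) 2)
    (hW : ∀ i : ℕ, W (lp.single 2 i 1) = (α i : ℂ) • lp.single 2 (i + 1) 1) :
    Tendsto
      (fun n : ℕ => ⨆ i : ℕ,
        ((2 : ℝ) ^ n)⁻¹ * ∑ j ∈ Finset.range (n + 1), (n.choose j : ℝ) * α (i + j))
      atTop (nhds r₀) ∧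
    (spectralRadius ℂ W).toReal = r₀ := by
  exact ⟨part1 α r₀ hlim, part2 α hpos r₀ hlim W hW⟩
end
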